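/- Let I ⊂ ℝ be a nondegenerate interval and let P be a real polynomial with P(0) ≠ 0 that factors as P = (X − 1)^{k₁}·(X − r₂)^{k₂}·Q in ℝ[X], where r₂ is a negative real number, k₁, k₂ are positive integers, and every complex root λ of Q satisfies 1 < |λ| < |r₂| (i.e., the positive root among the pair of real roots of opposite sign equals 1). Write P = Σ_{k=0}^N a_k X^k and (X − 1)·(X − r₂)^{k₂}·Q = Σ_{k=0}^M b_k X^k. Then a continuous decreasing surjection g : I → I satisfies a_N g^N(x) + … + a_1 g(x) + a_0 x = 0 for all x ∈ I if and only if it satisfies b_M g^M(x) + … + b_1 g(x) + b_0 x = 0 for all x ∈ I. -/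

import Mathlib

open Polynomial

noncomputable section
namespace ReduceOrderAux


/-- The shift operator on bilateral real sequences. -/
def E : (ℤ → ℝ) →ₗ[ℝ] (ℤ → ℝ) where
  toFun u := fun n => u (n + 1)
  map_add' u v := rfl
  map_smul' c u := rfl

lemma E_apply (u : ℤ → ℝ) (n : ℤ) : E u n = u (n + 1) := rfl

lemma E_pow_apply (k : ℕ) (u : ℤ → ℝ) (n : ℤ) : (E ^ k) u n = u (n + k) := by
  induction k generalizing u n with
  | zero => simp
  | succ k ih =>
      have h : (E ^ (k + 1)) u = (E ^ k) (E u) := by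
        rw [pow_succ]; rfl
      rw [h, ih, E_apply]
      congr 1
      push_cast
      ring

lemma phi_apply (A : ℝ[X]) (u : ℤ → ℝ) (n : ℤ) :
    (aeval E A) u n
      = ∑ k ∈ Finset.range (A.natDegree + 1), A.coeff k * u (n + k) := by
  rw [Polynomial.aeval_eq_sum_range]
  rw [LinearMap.coe_sum, Finset.sum_apply, Finset.sum_apply]
  refine Finset.sum_congr rfl fun k _ => ?_
  rw [LinearMap.smul_apply, Pi.smul_apply, E_pow_apply, smul_eq_mul]

/-- Bounded on one tail. -/
def TailB (z : ℤ → ℝ) : Prop :=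
  (∃ N C, ∀ n ≤ N, |z n| ≤ C) ∨ (∃ N C, ∀ n ≥ N, |z n| ≤ C)

lemma step_all {z : ℤ → ℝ} (h : ∀ n : ℤ, z (n + 1) = z n) : ∀ n : ℤ, z n = z 0 := by
  intro n
  induction n using Int.induction_on with
  | zero => rfl
  | succ k ih => rw [h k, ih]
  | pred k ih => rw [← ih, ← h (-(k:ℤ) - 1)]; congr 1; ring

lemma diff_const (m : ℕ) : ∀ z : ℤ → ℝ, ((E - 1) ^ m) z = 0 → TailB z →
    ∀ n : ℤ, z (n + 1) = z n := by
  induction m with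
  | zero =>
      intro z h _ n
      have hz : z = 0 := by simpa using h
      simp [hz]
  | succ m ih =>
      intro z h hb n
      set w : ℤ → ℝ := fun n => z (n + 1) - z n with hw
      have hwE : (E - 1) z = w := by
        funext k; rfl
      have h1 : ((E - 1) ^ m) w = 0 := by
        rw [← hwE, ← Module.End.mul_apply, ← pow_succ]
        exact h
      have hbw : TailB w := by
        rcases hb with ⟨N, C, hC⟩ | ⟨N, C, hC⟩
        · refine Or.inl ⟨N - 1, 2 * C, fun k hk => ?_⟩
          have h2 : |z (k + 1)| ≤ C := hC _ (by omega)
          have h3 : |z k| ≤ C := hC _ (by omega)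
          calc |z (k + 1) - z k| ≤ |z (k+1)| + |z k| := abs_sub _ _
          _ ≤ 2 * C := by linarith
        · refine Or.inr ⟨N, 2 * C, fun k hk => ?_⟩
          have h2 : |z (k + 1)| ≤ C := hC _ (by omega)
          have h3 : |z k| ≤ C := hC _ (by omega)
          calc |z (k + 1) - z k| ≤ |z (k+1)| + |z k| := abs_sub _ _
          _ ≤ 2 * C := by linarith
      have hwconst : ∀ k : ℤ, w k = w 0 := step_all (ih w h1 hbw)
      have haff : ∀ k : ℤ, z k = z 0 + w 0 * k := by
        intro k
        induction k using Int.induction_on with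
        | zero => simp
        | succ j ihj =>
            have : z (j + 1) = z j + w j := by simp [hw]
            rw [this, ihj, hwconst j]; push_cast; ring
        | pred j ihj =>
            have : z (-(j:ℤ) - 1) = z (-(j:ℤ)) - w (-(j:ℤ) - 1) := by
              have h5 : w (-(j:ℤ) - 1) = z (-(j:ℤ) - 1 + 1) - z (-(j:ℤ) - 1) := rfl
              rw [h5]; ring_nf
            rw [this, ihj, hwconst (-(j:ℤ) - 1)]; push_cast; ring
      have hw0 : w 0 = 0 := by
        by_contra hne
        have hpos : 0 < |w 0| := abs_pos.mpr hne
        rcases hb with ⟨N, C, hC⟩ | ⟨N, C, hC⟩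
        all_goals {
          have key : ∀ k : ℤ, |z k| ≤ C → |(k:ℝ)| ≤ (C + |z 0|) / |w 0| := by
            intro k hk
            rw [haff k] at hk
            have h5 : |w 0 * (k:ℝ)| - |z 0| ≤ |z 0 + w 0 * k| := by
              have h6 := abs_sub_abs_le_abs_sub (w 0 * (k:ℝ)) (-(z 0))
              simp only [abs_neg, sub_neg_eq_add] at h6
              calc |w 0 * (k:ℝ)| - |z 0| ≤ |w 0 * (k:ℝ) + z 0| := h6
              _ = |z 0 + w 0 * k| := by rw [add_comm]
            rw [abs_mul] at h5
            rw [le_div_iff₀ hpos, mul_comm]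
            linarith
          have hC0 : (0:ℝ) ≤ C := le_trans (abs_nonneg _) (hC N le_rfl)
          have hBnn : (0:ℝ) ≤ (C + |z 0|) / |w 0| :=
            div_nonneg (by positivity) (le_of_lt hpos)
          set c : ℕ := ⌈(C + |z 0|) / |w 0|⌉₊ with hc
          have hcB : (C + |z 0|) / |w 0| ≤ (c:ℝ) := Nat.le_ceil _
          first
          | · -- left tail
              set k : ℤ := min N 0 - (c + 1) with hk
              have hk1 : k ≤ N := by omega
              have h7 := key k (hC k hk1)
              have h8 : (k:ℝ) ≤ -((c:ℝ) + 1) := by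
                have : (k:ℤ) ≤ -((c:ℤ) + 1) := by omega
                exact_mod_cast this
              have h9 : (c:ℝ) + 1 ≤ |(k:ℝ)| := by
                rw [abs_of_nonpos (by linarith)]
                linarith
              linarith
          | · -- right tail
              set k : ℤ := max N 0 + (c + 1) with hk
              have hk1 : k ≥ N := by omega
              have h7 := key k (hC k hk1)
              have h8 : ((c:ℝ) + 1) ≤ (k:ℝ) := by
                have : ((c:ℤ) + 1) ≤ k := by omega
                exact_mod_cast this
              have h9 : (c:ℝ) + 1 ≤ |(k:ℝ)| := by
                rw [abs_of_nonneg (by linarith)]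
                linarith
              linarith
        }
      have h10 : z (n+1) - z n = w n := rfl
      have h11 : w n = 0 := by rw [hwconst n, hw0]
      linarith [h10, h11]

lemma chainI {s : ℤ → ℝ} (h : ∀ n, s n ≤ s (n + 1)) {a b : ℤ} (hab : a ≤ b) :
    s a ≤ s b := by
  have H : ∀ b, a ≤ b → s a ≤ s b := by
    refine Int.le_induction le_rfl ?_
    intro n _ ih
    exact le_trans ih (h n)
  exact H b hab

lemma chainD {s : ℤ → ℝ} (h : ∀ n, s (n + 1) ≤ s n) {a b : ℤ} (hab : a ≤ b) :
    s b ≤ s a := by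
  have H : ∀ b, a ≤ b → s b ≤ s a := by
    refine Int.le_induction le_rfl ?_
    intro n _ ih
    exact le_trans (h n) ih
  exact H b hab

lemma absb {a b t : ℝ} (h1 : a ≤ t) (h2 : t ≤ b) : |t| ≤ |a| + |b| := by
  rw [abs_le]
  constructor
  · have := neg_abs_le a
    have := le_abs_self b
    have := abs_nonneg b
    linarith
  · have := le_abs_self b
    have := abs_nonneg a
    linarith

variable {I : Set ℝ} {g : ℝ → ℝ}

/-- a decreasing continuous surjection of an ord-connected set has a fixed point -/
lemma exists_fixed (hI : I.OrdConnected) (hne : ∃ a, a ∈ I)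
    (hg : Set.MapsTo g I I) (hgc : ContinuousOn g I) (hgm : StrictAntiOn g I) :
    ∃ c ∈ I, g c = c := by
  obtain ⟨a, ha⟩ := hne
  rcases lt_trichotomy (g a) a with hlt | heq | hgt
  · set b := g a with hb
    have hbI : b ∈ I := hg ha
    have hba : b < a := hlt
    have hgb : b < g b := by
      have := hgm hbI ha hba
      rwa [← hb] at this
    have hsub : Set.Icc b a ⊆ I := hI.out hbI ha
    have hcont : ContinuousOn (fun t => g t - t) (Set.Icc b a) :=
      (hgc.mono hsub).sub continuousOn_id
    have h0 : (0:ℝ) ∈ Set.Icc (g a - a) (g b - b) := by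
      constructor <;> [linarith; linarith]
    have := intermediate_value_Icc' hba.le hcont h0
    obtain ⟨c, hc, hc0⟩ := this
    exact ⟨c, hsub hc, by dsimp at hc0; linarith⟩
  · exact ⟨a, ha, heq⟩
  · set b := g a with hb
    have hbI : b ∈ I := hg ha
    have hab : a < b := hgt
    have hgb : g b < b := by
      have := hgm ha hbI hab
      rwa [← hb] at this
    have hsub : Set.Icc a b ⊆ I := hI.out ha hbI
    have hcont : ContinuousOn (fun t => g t - t) (Set.Icc a b) :=
      (hgc.mono hsub).sub continuousOn_id
    have h0 : (0:ℝ) ∈ Set.Icc (g b - b) (g a - a) := by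
      constructor <;> [linarith; linarith]
    have := intermediate_value_Icc' hab.le hcont h0
    obtain ⟨c, hc, hc0⟩ := this
    exact ⟨c, hsub hc, by dsimp at hc0; linarith⟩

/-- bilateral orbit with bounded tail -/
lemma orbit_exists (hI : I.OrdConnected)
    (hg : Set.MapsTo g I I) (hgc : ContinuousOn g I) (hgm : StrictAntiOn g I)
    (hgs : Set.SurjOn g I I) {x : ℝ} (hx : x ∈ I) :
    ∃ y : ℤ → ℝ, y 0 = x ∧ (∀ n, y n ∈ I) ∧ (∀ n, y (n + 1) = g (y n)) ∧ TailB y := by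
  -- inverse function via choice
  have H : ∀ t : ℝ, ∃ s : ℝ, t ∈ I → s ∈ I ∧ g s = t := by
    intro t
    by_cases ht : t ∈ I
    · obtain ⟨s, hs, hgs'⟩ := hgs ht
      exact ⟨s, fun _ => ⟨hs, hgs'⟩⟩
    · exact ⟨t, fun h => absurd h ht⟩
  choose ginv hginv using H
  set y : ℤ → ℝ := fun n => if 0 ≤ n then g^[n.toNat] x else ginv^[(-n).toNat] x with hy
  have hfI : ∀ m : ℕ, g^[m] x ∈ I := by
    intro m
    induction m with
    | zero => simpa using hx
    | succ m ih => rw [Function.iterate_succ_apply']; exact hg ih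
  have hbI : ∀ m : ℕ, ginv^[m] x ∈ I := by
    intro m
    induction m with
    | zero => simpa using hx
    | succ m ih => rw [Function.iterate_succ_apply']; exact (hginv _ ih).1
  have hbEq : ∀ m : ℕ, g (ginv^[m + 1] x) = ginv^[m] x := by
    intro m
    rw [Function.iterate_succ_apply']
    exact (hginv _ (hbI m)).2
  have hyI : ∀ n : ℤ, y n ∈ I := by
    intro n
    by_cases h : 0 ≤ n
    · simp only [hy, if_pos h]; exact hfI _
    · simp only [hy, if_neg h]; exact hbI _
  have hy0 : y 0 = x := by simp [hy]
  have hstep : ∀ n : ℤ, y (n + 1) = g (y n) := by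
    intro n
    by_cases h : 0 ≤ n
    · have h1 : 0 ≤ n + 1 := by omega
      have h2 : (n + 1).toNat = n.toNat + 1 := by omega
      simp only [hy, if_pos h, if_pos h1, h2]
      rw [Function.iterate_succ_apply']
    · by_cases h1 : n = -1
      · subst h1
        have e0 : ((-1 : ℤ) + 1) = 0 := by norm_num
        have e1 : ((-(-1) : ℤ)).toNat = 1 := by norm_num
        simp only [hy, e0, if_pos le_rfl, if_neg (by norm_num : ¬(0:ℤ) ≤ -1), e1]
        have := hbEq 0
        simp at this ⊢
        rw [this]
      · have h2 : ¬ 0 ≤ n + 1 := by omega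
        have h3 : (-n).toNat = (-(n+1)).toNat + 1 := by omega
        simp only [hy, if_neg h, if_neg h2, h3]
        rw [hbEq]
  -- fixed point
  obtain ⟨c, hcI, hcfix⟩ := exists_fixed hI ⟨x, hx⟩ hg hgc hgm
  have anti : ∀ {s t : ℝ}, s ∈ I → t ∈ I → s ≤ t → g t ≤ g s := by
    intro s t hs ht hst
    exact hgm.antitoneOn hs ht hst
  -- side lemmas
  have side_ge : c ≤ x → ∀ n : ℤ, c ≤ y (2 * n) ∧ y (2 * n + 1) ≤ c := by
    intro hxc
    intro n
    induction n using Int.induction_on with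
    | zero =>
        constructor
        · simpa [hy0] using hxc
        · have e : (2 * (0:ℤ) + 1) = 0 + 1 := by ring
          rw [e, hstep 0, hy0]
          calc g x ≤ g c := anti hcI hx hxc
          _ = c := hcfix
    | succ n ih =>
        obtain ⟨h1, h2⟩ := ih
        have e1 : (2 * ((n:ℤ) + 1)) = (2 * n + 1) + 1 := by ring
        have e2 : (2 * ((n:ℤ) + 1) + 1) = (2 * n + 1 + 1) + 1 := by ring
        have k1 : c ≤ y (2 * n + 1 + 1) := by
          rw [hstep (2 * n + 1)]
          calc c = g c := hcfix.symm
          _ ≤ g (y (2 * n + 1)) := anti (hyI _) hcI h2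
        refine ⟨by rw [e1]; exact k1, ?_⟩
        rw [e2, hstep (2 * n + 1 + 1)]
        calc g (y (2 * n + 1 + 1)) ≤ g c := anti hcI (hyI _) k1
        _ = c := hcfix
    | pred n ih =>
        obtain ⟨h1, h2⟩ := ih
        have e1 : (2 * (-(n:ℤ))) = (2 * (-(n:ℤ) - 1) + 1) + 1 := by ring
        have k1 : y (2 * (-(n:ℤ) - 1) + 1) ≤ c := by
          by_contra hcon
          push_neg at hcon
          have : g (y (2 * (-(n:ℤ) - 1) + 1)) < g c := hgm hcI (hyI _) hcon
          rw [hcfix, ← hstep] at this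
          rw [← e1] at this
          linarith
        refine ⟨?_, k1⟩
        by_contra hcon
        push_neg at hcon
        have : g c < g (y (2 * (-(n:ℤ) - 1))) := hgm (hyI _) hcI hcon
        rw [hcfix, ← hstep] at this
        linarith
  have side_le : x ≤ c → ∀ n : ℤ, y (2 * n) ≤ c ∧ c ≤ y (2 * n + 1) := by
    intro hxc
    intro n
    induction n using Int.induction_on with
    | zero =>
        constructor
        · simpa [hy0] using hxc
        · have e : (2 * (0:ℤ) + 1) = 0 + 1 := by ring
          rw [e, hstep 0, hy0]
          calc c = g c := hcfix.symm
          _ ≤ g x := anti hx hcI hxc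
    | succ n ih =>
        obtain ⟨h1, h2⟩ := ih
        have e1 : (2 * ((n:ℤ) + 1)) = (2 * n + 1) + 1 := by ring
        have e2 : (2 * ((n:ℤ) + 1) + 1) = (2 * n + 1 + 1) + 1 := by ring
        have k1 : y (2 * n + 1 + 1) ≤ c := by
          rw [hstep (2 * n + 1)]
          calc g (y (2 * n + 1)) ≤ g c := anti hcI (hyI _) h2
          _ = c := hcfix
        refine ⟨by rw [e1]; exact k1, ?_⟩
        rw [e2, hstep (2 * n + 1 + 1)]
        calc c = g c := hcfix.symm
        _ ≤ g (y (2 * n + 1 + 1)) := anti (hyI _) hcI k1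
    | pred n ih =>
        obtain ⟨h1, h2⟩ := ih
        have e1 : (2 * (-(n:ℤ))) = (2 * (-(n:ℤ) - 1) + 1) + 1 := by ring
        have k1 : c ≤ y (2 * (-(n:ℤ) - 1) + 1) := by
          by_contra hcon
          push_neg at hcon
          have : g c < g (y (2 * (-(n:ℤ) - 1) + 1)) := hgm (hyI _) hcI hcon
          rw [hcfix, ← hstep] at this
          rw [← e1] at this
          linarith
        refine ⟨?_, k1⟩
        by_contra hcon
        push_neg at hcon
        have : g (y (2 * (-(n:ℤ) - 1))) < g c := hgm hcI (hyI _) hcon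
        rw [hcfix, ← hstep] at this
        linarith
  -- monotonicity of even subsequence
  have mono_inc : y 0 ≤ y 2 → ∀ n : ℤ, y (2 * n) ≤ y (2 * n + 2) := by
    intro h02 n
    induction n using Int.induction_on with
    | zero => simpa using h02
    | succ n ih =>
        have o1 : y (2 * (n:ℤ) + 2 + 1) ≤ y (2 * n + 1) := by
          rw [hstep (2 * n + 2), hstep (2 * n)]
          exact anti (hyI _) (hyI _) ih
        have : y (2 * (n:ℤ) + 1 + 1) ≤ y (2 * n + 2 + 1 + 1) := by
          rw [hstep (2 * n + 1), hstep (2 * n + 2 + 1)]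
          exact anti (hyI _) (hyI _) o1
        have e3 : (2 * ((n:ℤ) + 1) + 2) = 2 * n + 2 + 1 + 1 := by ring
        have e2 : (2 * ((n:ℤ) + 1)) = 2 * n + 1 + 1 := by ring
        rw [e3, e2]
        exact this
    | pred n ih =>
        -- show y (2*(-n-1)) ≤ y (2*(-n-1)+2) given ih at -n
        by_contra hcon
        push_neg at hcon
        have s1 : g (y (2 * (-(n:ℤ) - 1))) < g (y (2 * (-(n:ℤ) - 1) + 2)) :=
          hgm (hyI _) (hyI _) hcon
        rw [← hstep (2 * (-(n:ℤ) - 1))] at s1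
        have e4 : (2 * (-(n:ℤ) - 1) + 2 + 1) = (2 * (-(n:ℤ) - 1) + 2) + 1 := by ring
        rw [show g (y (2 * (-(n:ℤ) - 1) + 2)) = y (2 * (-(n:ℤ) - 1) + 2 + 1) from (by rw [e4, hstep])] at s1
        have s2 : g (y (2 * (-(n:ℤ) - 1) + 2 + 1)) < g (y (2 * (-(n:ℤ) - 1) + 1)) :=
          hgm (hyI _) (hyI _) s1
        have e5 : (2 * (-(n:ℤ) - 1) + 1 + 1) = 2 * (-(n:ℤ) - 1) + 2 := by ring
        rw [← hstep (2 * (-(n:ℤ) - 1) + 1), e5] at s2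
        have e6 : (2 * (-(n:ℤ) - 1) + 2 + 1 + 1) = 2 * (-(n:ℤ) - 1) + 4 := by ring
        rw [← hstep (2 * (-(n:ℤ) - 1) + 2 + 1), e6] at s2
        -- s2 : y (2*(-n-1)+4) < y (2*(-n-1)+2), but ih : y (2*(-n)) ≤ y (2*(-n)+2)
        have e7 : (2 * (-(n:ℤ))) = 2 * (-(n:ℤ) - 1) + 2 := by ring
        have e8 : (2 * (-(n:ℤ)) + 2) = 2 * (-(n:ℤ) - 1) + 4 := by ring
        rw [e8, e7] at ih
        linarith
  have mono_dec : y 2 ≤ y 0 → ∀ n : ℤ, y (2 * n + 2) ≤ y (2 * n) := by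
    intro h02 n
    induction n using Int.induction_on with
    | zero => simpa using h02
    | succ n ih =>
        have o1 : y (2 * (n:ℤ) + 1) ≤ y (2 * n + 2 + 1) := by
          rw [hstep (2 * n + 2), hstep (2 * n)]
          exact anti (hyI _) (hyI _) ih
        have : y (2 * (n:ℤ) + 2 + 1 + 1) ≤ y (2 * n + 1 + 1) := by
          rw [hstep (2 * n + 1), hstep (2 * n + 2 + 1)]
          exact anti (hyI _) (hyI _) o1
        have e3 : (2 * ((n:ℤ) + 1) + 2) = 2 * n + 2 + 1 + 1 := by ring
        have e2 : (2 * ((n:ℤ) + 1)) = 2 * n + 1 + 1 := by ring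
        rw [e3, e2]
        exact this
    | pred n ih =>
        by_contra hcon
        push_neg at hcon
        have s1 : g (y (2 * (-(n:ℤ) - 1) + 2)) < g (y (2 * (-(n:ℤ) - 1))) :=
          hgm (hyI _) (hyI _) hcon
        rw [← hstep (2 * (-(n:ℤ) - 1))] at s1
        have e4 : (2 * (-(n:ℤ) - 1) + 2 + 1) = (2 * (-(n:ℤ) - 1) + 2) + 1 := by ring
        rw [show g (y (2 * (-(n:ℤ) - 1) + 2)) = y (2 * (-(n:ℤ) - 1) + 2 + 1) from (by rw [e4, hstep])] at s1
        have s2 : g (y (2 * (-(n:ℤ) - 1) + 1)) < g (y (2 * (-(n:ℤ) - 1) + 2 + 1)) :=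
          hgm (hyI _) (hyI _) s1
        have e5 : (2 * (-(n:ℤ) - 1) + 1 + 1) = 2 * (-(n:ℤ) - 1) + 2 := by ring
        rw [← hstep (2 * (-(n:ℤ) - 1) + 1), e5] at s2
        have e6 : (2 * (-(n:ℤ) - 1) + 2 + 1 + 1) = 2 * (-(n:ℤ) - 1) + 4 := by ring
        rw [← hstep (2 * (-(n:ℤ) - 1) + 2 + 1), e6] at s2
        have e7 : (2 * (-(n:ℤ))) = 2 * (-(n:ℤ) - 1) + 2 := by ring
        have e8 : (2 * (-(n:ℤ)) + 2) = 2 * (-(n:ℤ) - 1) + 4 := by ring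
        rw [e8, e7] at ih
        linarith
  -- tail boundedness
  have hy1 : y 1 = g (y 0) := by
    have := hstep 0
    simpa using this
  have htail : TailB y := by
    set Cb : ℝ := |c| + |y 0| + |y 1| with hCb
    have habs : ∀ {a b : ℝ} {t : ℝ}, a ≤ t → t ≤ b →
        (|a| + |b| ≤ Cb) → |t| ≤ Cb := by
      intro a b t h1 h2 h3
      exact le_trans (absb h1 h2) h3
    rcases le_total c x with hxc | hxc
    · rcases le_total (y 0) (y 2) with h02 | h02
      · -- evens increasing & ≥ c : backward tail bounded
        refine Or.inl ⟨0, Cb, fun n hn => ?_⟩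
        obtain ⟨m, hm | hm⟩ := Int.even_or_odd' n
        · subst hm
          have hm0 : m ≤ 0 := by omega
          have lo : c ≤ y (2 * m) := (side_ge hxc m).1
          have hi : y (2 * m) ≤ y 0 := by
            have := chainI (s := fun k => y (2 * k))
              (fun k => by
                have e : (2 * (k + 1) : ℤ) = 2 * k + 2 := by ring
                rw [e]
                exact mono_inc h02 k) hm0
            simpa using this
          refine habs lo hi ?_
          have := abs_nonneg (y 1); rw [hCb]; linarith
        · subst hm
          have hm0 : m ≤ 0 := by omega
          have hi : y (2 * m + 1) ≤ c := (side_ge hxc m).2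
          have lo : y 1 ≤ y (2 * m + 1) := by
            have h1 : y (2 * m) ≤ y 0 := by
              have := chainI (s := fun k => y (2 * k))
                (fun k => by
                  have e : (2 * (k + 1) : ℤ) = 2 * k + 2 := by ring
                  rw [e]
                  exact mono_inc h02 k) hm0
              simpa using this
            rw [hy1, hstep (2 * m)]
            exact anti (hyI _) (hyI _) h1
          refine habs lo hi ?_
          have := abs_nonneg (y 0); rw [hCb]; linarith
      · -- evens decreasing & ≥ c : forward tail bounded
        refine Or.inr ⟨0, Cb, fun n hn => ?_⟩
        obtain ⟨m, hm | hm⟩ := Int.even_or_odd' n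
        · subst hm
          have hm0 : 0 ≤ m := by omega
          have lo : c ≤ y (2 * m) := (side_ge hxc m).1
          have hi : y (2 * m) ≤ y 0 := by
            have := chainD (s := fun k => y (2 * k))
              (fun k => by
                have e : (2 * (k + 1) : ℤ) = 2 * k + 2 := by ring
                rw [e]
                exact mono_dec h02 k) hm0
            simpa using this
          refine habs lo hi ?_
          have := abs_nonneg (y 1); rw [hCb]; linarith
        · subst hm
          have hm0 : 0 ≤ m := by omega
          have hi : y (2 * m + 1) ≤ c := (side_ge hxc m).2
          have lo : y 1 ≤ y (2 * m + 1) := by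
            have h1 : y (2 * m) ≤ y 0 := by
              have := chainD (s := fun k => y (2 * k))
                (fun k => by
                  have e : (2 * (k + 1) : ℤ) = 2 * k + 2 := by ring
                  rw [e]
                  exact mono_dec h02 k) hm0
              simpa using this
            rw [hy1, hstep (2 * m)]
            exact anti (hyI _) (hyI _) h1
          refine habs lo hi ?_
          have := abs_nonneg (y 0); rw [hCb]; linarith
    · rcases le_total (y 0) (y 2) with h02 | h02
      · -- evens increasing & ≤ c : forward tail bounded
        refine Or.inr ⟨0, Cb, fun n hn => ?_⟩
        obtain ⟨m, hm | hm⟩ := Int.even_or_odd' n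
        · subst hm
          have hm0 : 0 ≤ m := by omega
          have hi : y (2 * m) ≤ c := (side_le hxc m).1
          have lo : y 0 ≤ y (2 * m) := by
            have := chainI (s := fun k => y (2 * k))
              (fun k => by
                have e : (2 * (k + 1) : ℤ) = 2 * k + 2 := by ring
                rw [e]
                exact mono_inc h02 k) hm0
            simpa using this
          refine habs lo hi ?_
          have := abs_nonneg (y 1); rw [hCb]; linarith
        · subst hm
          have hm0 : 0 ≤ m := by omega
          have lo : c ≤ y (2 * m + 1) := (side_le hxc m).2
          have hi : y (2 * m + 1) ≤ y 1 := by
            have h1 : y 0 ≤ y (2 * m) := by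
              have := chainI (s := fun k => y (2 * k))
                (fun k => by
                  have e : (2 * (k + 1) : ℤ) = 2 * k + 2 := by ring
                  rw [e]
                  exact mono_inc h02 k) hm0
              simpa using this
            rw [hy1, hstep (2 * m)]
            exact anti (hyI _) (hyI _) h1
          refine habs lo hi ?_
          have := abs_nonneg (y 0); rw [hCb]; linarith
      · -- evens decreasing & ≤ c : backward tail bounded
        refine Or.inl ⟨0, Cb, fun n hn => ?_⟩
        obtain ⟨m, hm | hm⟩ := Int.even_or_odd' n
        · subst hm
          have hm0 : m ≤ 0 := by omega
          have hi : y (2 * m) ≤ c := (side_le hxc m).1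
          have lo : y 0 ≤ y (2 * m) := by
            have := chainD (s := fun k => y (2 * k))
              (fun k => by
                have e : (2 * (k + 1) : ℤ) = 2 * k + 2 := by ring
                rw [e]
                exact mono_dec h02 k) hm0
            simpa using this
          refine habs lo hi ?_
          have := abs_nonneg (y 1); rw [hCb]; linarith
        · subst hm
          have hm0 : m ≤ 0 := by omega
          have lo : c ≤ y (2 * m + 1) := (side_le hxc m).2
          have hi : y (2 * m + 1) ≤ y 1 := by
            have h1 : y 0 ≤ y (2 * m) := by
              have := chainD (s := fun k => y (2 * k))
                (fun k => by
                  have e : (2 * (k + 1) : ℤ) = 2 * k + 2 := by ring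
                  rw [e]
                  exact mono_dec h02 k) hm0
              simpa using this
            rw [hy1, hstep (2 * m)]
            exact anti (hyI _) (hyI _) h1
          refine habs lo hi ?_
          have := abs_nonneg (y 0); rw [hCb]; linarith
  exact ⟨y, hy0, hyI, hstep, htail⟩


lemma tail_phi (A : ℝ[X]) {u : ℤ → ℝ} (h : TailB u) : TailB ((aeval E A) u) := by
  rcases h with ⟨N, C, hC⟩ | ⟨N, C, hC⟩
  · refine Or.inl ⟨N - (A.natDegree + 1),
      (∑ k ∈ Finset.range (A.natDegree + 1), |A.coeff k|) * C, fun n hn => ?_⟩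
    rw [phi_apply]
    calc |∑ k ∈ Finset.range (A.natDegree + 1), A.coeff k * u (n + k)|
        ≤ ∑ k ∈ Finset.range (A.natDegree + 1), |A.coeff k * u (n + k)| :=
          Finset.abs_sum_le_sum_abs _ _
    _ ≤ ∑ k ∈ Finset.range (A.natDegree + 1), |A.coeff k| * C := by
          refine Finset.sum_le_sum fun k hk => ?_
          rw [abs_mul]
          refine mul_le_mul_of_nonneg_left ?_ (abs_nonneg _)
          refine hC _ ?_
          have hk' : k ≤ A.natDegree := by
            have := Finset.mem_range.mp hk; omega
          omega
    _ = (∑ k ∈ Finset.range (A.natDegree + 1), |A.coeff k|) * C := by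
          rw [Finset.sum_mul]
  · refine Or.inr ⟨N,
      (∑ k ∈ Finset.range (A.natDegree + 1), |A.coeff k|) * C, fun n hn => ?_⟩
    rw [phi_apply]
    calc |∑ k ∈ Finset.range (A.natDegree + 1), A.coeff k * u (n + k)|
        ≤ ∑ k ∈ Finset.range (A.natDegree + 1), |A.coeff k * u (n + k)| :=
          Finset.abs_sum_le_sum_abs _ _
    _ ≤ ∑ k ∈ Finset.range (A.natDegree + 1), |A.coeff k| * C := by
          refine Finset.sum_le_sum fun k hk => ?_
          rw [abs_mul]
          refine mul_le_mul_of_nonneg_left ?_ (abs_nonneg _)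
          refine hC _ ?_
          omega
    _ = (∑ k ∈ Finset.range (A.natDegree + 1), |A.coeff k|) * C := by
          rw [Finset.sum_mul]

end ReduceOrderAux

end

open ReduceOrderAux

/-- Eliminating roots for decreasing solutions when the positive extreme root equals `1`:
with `P = (X − 1)^{k₁}·(X − r₂)^{k₂}·Q`, `r₂ < 0`, and every complex root `λ` of `Q`
satisfying `1 < |λ| < |r₂|`, a continuous decreasing surjection `g : I → I` satisfies the
equation for `P` iff it satisfies the equation for `(X − 1)·(X − r₂)^{k₂}·Q`. -/
theorem reduce_order_opposite_sign_roots_decreasing_root_one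
    (I : Set ℝ) (hI : I.OrdConnected) (hne : ∃ a ∈ I, ∃ b ∈ I, a ≠ b)
    (P Q : Polynomial ℝ) (r₂ : ℝ) (k₁ k₂ : ℕ) (hk₁ : 0 < k₁) (hk₂ : 0 < k₂)
    (hP0 : P.eval 0 ≠ 0) (hr₂ : r₂ < 0)
    (hfac : P = (X - 1) ^ k₁ * (X - C r₂) ^ k₂ * Q)
    (hmod : ∀ z : ℂ, aeval z Q = 0 →
      1 < ‖z‖ ∧ ‖z‖ < |r₂|)
    (g : ℝ → ℝ) (hg : Set.MapsTo g I I) (hgc : ContinuousOn g I)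
    (hgm : StrictAntiOn g I) (hgs : Set.SurjOn g I I) :
    (∀ x ∈ I, ∑ k ∈ Finset.range (P.natDegree + 1), P.coeff k * g^[k] x = 0) ↔
      (∀ x ∈ I, ∑ k ∈ Finset.range (((X - 1) * (X - C r₂) ^ k₂ * Q).natDegree + 1),
        ((X - 1) * (X - C r₂) ^ k₂ * Q).coeff k * g^[k] x = 0) := by
  classical
  set R : Polynomial ℝ := (X - C r₂) ^ k₂ * Q with hR
  set S : Polynomial ℝ := (X - 1) * (X - C r₂) ^ k₂ * Q with hS
  have hSfac : S = (X - 1) * R := by rw [hS, hR, mul_assoc]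
  have hPfac : P = (X - 1) ^ k₁ * R := by rw [hfac, hR, mul_assoc]
  have haeX1 : aeval E (X - 1 : Polynomial ℝ) = E - 1 := by
    rw [map_sub, aeval_X, map_one]
  -- orbit machinery
  have orbit := fun {x : ℝ} (hx : x ∈ I) => orbit_exists hI hg hgc hgm hgs hx
  have bridge : ∀ (y : ℤ → ℝ), (∀ n, y (n + 1) = g (y n)) →
      ∀ (A : Polynomial ℝ) (n : ℤ),
        (aeval E A) y n
          = ∑ k ∈ Finset.range (A.natDegree + 1), A.coeff k * g^[k] (y n) := by
    intro y hstep A n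
    have hit : ∀ (k : ℕ) (n : ℤ), y (n + k) = g^[k] (y n) := by
      intro k
      induction k with
      | zero => intro n; simp
      | succ k ih =>
          intro n
          have e : (n + ((k:ℤ) + 1)) = (n + k) + 1 := by push_cast; ring
          rw [show ((k + 1 : ℕ) : ℤ) = (k : ℤ) + 1 by push_cast; ring] at *
          rw [e, hstep (n + k), ih n, ← Function.iterate_succ_apply' g]
    rw [phi_apply]
    refine Finset.sum_congr rfl fun k _ => ?_
    rw [hit k n]
  constructor
  · -- hard direction
    intro hP x hx
    obtain ⟨y, hy0, hyI, hstep, htail⟩ := orbit hx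
    have hPz : ∀ n : ℤ, (aeval E P) y n = 0 := by
      intro n
      rw [bridge y hstep P n]
      exact hP (y n) (hyI n)
    set z : ℤ → ℝ := (aeval E R) y with hz
    have haeP : aeval E P = (E - 1) ^ k₁ * aeval E R := by
      rw [hPfac, map_mul, map_pow, haeX1]
    have hEz : ((E - 1) ^ k₁) z = 0 := by
      funext n
      have h := hPz n
      rw [haeP, Module.End.mul_apply] at h
      exact h
    have htailz : TailB z := tail_phi R htail
    have hzstep := diff_const k₁ z hEz htailz
    have hb0 : (aeval E S) y 0
        = ∑ k ∈ Finset.range (S.natDegree + 1), S.coeff k * g^[k] x := by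
      rw [bridge y hstep S 0, hy0]
    rw [← hb0]
    rw [hSfac, map_mul, haeX1, Module.End.mul_apply]
    show ((E - 1) z) 0 = 0
    rw [LinearMap.sub_apply, Module.End.one_apply]
    have : E z 0 = z 1 := rfl
    rw [Pi.sub_apply]
    have h1 := hzstep 0
    show E z 0 - z 0 = 0
    rw [this]
    rw [show (1:ℤ) = 0 + 1 from rfl, h1]
    ring
  · -- easy direction
    intro hSh x hx
    obtain ⟨y, hy0, hyI, hstep, htail⟩ := orbit hx
    have hSz : (aeval E S) y = 0 := by
      funext n
      rw [bridge y hstep S n]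
      exact hSh (y n) (hyI n)
    have hPfac2 : P = (X - 1) ^ (k₁ - 1) * S := by
      rw [hSfac, ← mul_assoc, ← pow_succ, Nat.sub_add_cancel hk₁, hPfac]
    have hb0 : (aeval E P) y 0
        = ∑ k ∈ Finset.range (P.natDegree + 1), P.coeff k * g^[k] x := by
      rw [bridge y hstep P 0, hy0]
    rw [← hb0, hPfac2, map_mul, Module.End.mul_apply, hSz, map_zero]
    rfl
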